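/- Let F⁻(z₁,z₂,w) = (z₁√w, z₂w, w) where √ is the branch of square root on {Re w < 0} with π/2 < Arg w < 3π/2 (so √w = i√(−w) with the principal root). If (z₁,z₂,w) lies in a small neighborhood of the origin with Re w < 0 and satisfies the defining equation of M from the blow-up of the quadric {Im w* = |z₁*|²+|z₂*|²}, then F⁻(z₁,z₂,w) lies on the indefinite quadric Q⁻ = {Im w* = −|z₁*|² + |z₂*|²}. -/

import Mathlib

/-- The branch `F⁻(z₁,z₂,w) = (z₁√w, z₂w, w)` with `√w = i√(−w)` on `{Re w < 0}`:
a point of the hypersurface `M` (from the blow-up of the definite quadric) with `Re w < 0`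
and close to the origin is mapped onto the indefinite quadric
`Q⁻ = {Im w* = −|z₁*|² + |z₂*|²}`. -/
theorem stmt_5 : ∃ ε > (0:ℝ), ∀ z₁ z₂ w : ℂ,
    ‖z₁‖ < ε → ‖z₂‖ < ε → ‖w‖ < ε → w.re < 0 →
    w * (1 - 2 * Complex.I * ((‖z₂‖ : ℂ)) ^ 2 * (starRingEnd ℂ) w) ^ 2
      = (starRingEnd ℂ) w *
        (Complex.I * ((‖z₁‖ : ℂ)) ^ 2 +
          (1 - 2 * Complex.I * ((‖z₂‖ : ℂ)) ^ 2 * (starRingEnd ℂ) w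
            - ((‖z₁‖ : ℂ)) ^ 4) ^ ((1 : ℂ)/2)) ^ 2 →
    w.im = -‖z₁ * (Complex.I * (-w) ^ ((1 : ℂ)/2))‖ ^ 2
      + ‖z₂ * w‖ ^ 2 := by
  refine ⟨1/2, by norm_num, ?_⟩
  intro z₁ z₂ w hz₁ hz₂ hw hre heq
  have hw0 : w ≠ 0 := fun h => by rw [h] at hre; simp at hre
  set a : ℝ := ‖z₁‖ with ha
  set b : ℝ := ‖z₂‖ with hb
  set r : ℝ := ‖w‖ with hr
  have hr0 : 0 < r := norm_pos_iff.mpr hw0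
  have ha0 : 0 ≤ a := norm_nonneg _
  have hb0 : 0 ≤ b := norm_nonneg _
  set t : ℂ := 1 - 2 * Complex.I * ((b:ℂ)) ^ 2 * (starRingEnd ℂ) w - ((a:ℂ)) ^ 4 with hts
  set s : ℂ := t ^ ((1:ℂ)/2) with hs
  -- basic bounds
  have him : |w.im| ≤ r := Complex.abs_im_le_norm w
  have hre' : |w.re| ≤ r := Complex.abs_re_le_norm w
  -- Re t > 0
  have htre : t.re = 1 - 2*b^2*w.im - a^4 := by
    simp [hts, ← Complex.ofReal_pow, Complex.sub_re, Complex.mul_re, Complex.mul_im]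
  have htim : t.im = -(2*b^2*w.re) := by
    simp [hts, ← Complex.ofReal_pow, Complex.sub_im, Complex.mul_re, Complex.mul_im]
  have htrepos : 0 < t.re := by
    rw [htre]
    have h1 : a^4 < 1/16 := by
      have : a^2 < 1/4 := by nlinarith
      nlinarith
    have h2 : 2*b^2*w.im ≤ 1/4 := by nlinarith [abs_le.mp him]
    linarith
  have ht0 : t ≠ 0 := fun h => by rw [h] at htrepos; simp at htrepos
  -- s² = t
  have hs2 : s^2 = t := by
    rw [hs, sq, ← Complex.cpow_add _ _ ht0]
    norm_num
  -- Re s > 0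
  have hsre : 0 < s.re := by
    rw [hs, Complex.cpow_def_of_ne_zero ht0, Complex.exp_re]
    have harg : |Complex.arg t| < Real.pi / 2 :=
      Complex.abs_arg_lt_pi_div_two_iff.mpr (Or.inl htrepos)
    have him2 : (Complex.log t * (1/2)).im = Complex.arg t / 2 := by
      simp [Complex.mul_im, Complex.log_im]
      ring
    rw [him2]
    have hcos : 0 < Real.cos (Complex.arg t / 2) := by
      apply Real.cos_pos_of_mem_Ioo
      constructor
      · nlinarith [abs_lt.mp harg, Real.pi_pos]
      · nlinarith [abs_lt.mp harg, Real.pi_pos]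
    positivity
  -- main complex identity: (w*c)^2 = (r*(I*a²+s))^2
  have key : (w * (1 - 2 * Complex.I * ((b:ℂ)) ^ 2 * (starRingEnd ℂ) w))^2
      = ((r:ℂ) * (Complex.I * ((a:ℂ))^2 + s))^2 := by
    have hmc : w * (starRingEnd ℂ) w = ((r:ℂ))^2 := by
      rw [Complex.mul_conj, Complex.normSq_eq_norm_sq, ← hr]
      push_cast
      ring
    calc (w * (1 - 2 * Complex.I * ((b:ℂ)) ^ 2 * (starRingEnd ℂ) w))^2
        = w * ((starRingEnd ℂ) w *
          (Complex.I * ((a:ℂ)) ^ 2 + s) ^ 2) := by rw [← heq]; ring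
      _ = (w * (starRingEnd ℂ) w) * (Complex.I * ((a:ℂ))^2 + s)^2 := by ring
      _ = ((r:ℂ) * (Complex.I * ((a:ℂ))^2 + s))^2 := by rw [hmc]; ring
  have hcases := sq_eq_sq_iff_eq_or_eq_neg.mp key
  -- real and imaginary parts of w*c
  have hwc_re : (w * (1 - 2 * Complex.I * ((b:ℂ)) ^ 2 * (starRingEnd ℂ) w)).re = w.re := by
    simp [← Complex.ofReal_pow, Complex.mul_re, Complex.mul_im, Complex.sub_re, Complex.sub_im]
    ring
  have hr2 : w.re^2 + w.im^2 = r^2 := by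
    have h := Complex.sq_norm w
    rw [Complex.normSq_apply, ← hr] at h
    nlinarith [h]
  have hwc_im : (w * (1 - 2 * Complex.I * ((b:ℂ)) ^ 2 * (starRingEnd ℂ) w)).im
      = w.im - 2*b^2*r^2 := by
    simp [← Complex.ofReal_pow, Complex.mul_re, Complex.mul_im, Complex.sub_re, Complex.sub_im]
    linear_combination (-2*b^2) * hr2
  have hrhs_re : (((r:ℂ)) * (Complex.I * ((a:ℂ))^2 + s)).re = r * s.re := by
    simp [← Complex.ofReal_pow, Complex.mul_re, Complex.mul_im, Complex.add_re, Complex.add_im]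
  have hrhs_im : (((r:ℂ)) * (Complex.I * ((a:ℂ))^2 + s)).im = r * (a^2 + s.im) := by
    simp [← Complex.ofReal_pow, Complex.mul_re, Complex.mul_im, Complex.add_re, Complex.add_im]
  -- the imaginary part of s² = t gives 2 s.re s.im = -2 b² w.re
  have hsim_eq : 2 * s.re * s.im = -(2*b^2*w.re) := by
    have h := congrArg Complex.im hs2
    rw [htim] at h
    rw [sq, Complex.mul_im] at h
    linarith
  rcases hcases with hc | hc
  · -- plus case: contradiction since Re w < 0 but r * s.re > 0
    exfalso
    have h := congrArg Complex.re hc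
    rw [hwc_re, hrhs_re] at h
    have := mul_pos hr0 hsre
    linarith
  · -- minus case
    have hreeq := congrArg Complex.re hc
    have himeq := congrArg Complex.im hc
    rw [hwc_re, Complex.neg_re, hrhs_re] at hreeq
    rw [hwc_im, Complex.neg_im, hrhs_im] at himeq
    -- hreeq : w.re = -(r * s.re), himeq : w.im - 2b²r² = -(r*(a² + s.im))
    have hsimval : s.im = b^2 * r := by
      have h3 : (2*s.re)*s.im = (2*s.re)*(b^2*r) := by
        linear_combination hsim_eq - 2*b^2*hreeq
      exact mul_left_cancel₀ (by positivity) h3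
    have hgoal : w.im = -(a^2 * r) + b^2 * r^2 := by
      linear_combination himeq - r * hsimval
    -- compute the RHS of the target
    have habs : ‖(-w) ^ ((1:ℂ)/2)‖ = Real.sqrt r := by
      rw [show ((1:ℂ)/2) = (((1/2:ℝ)):ℂ) by norm_num, Complex.norm_cpow_real]
      rw [← Real.sqrt_eq_rpow]
      simp [← hr]
    have hsq : Real.sqrt r ^ 2 = r := Real.sq_sqrt hr0.le
    rw [hgoal, norm_mul, norm_mul, Complex.norm_I, habs, norm_mul, ← ha, ← hb, ← hr]
    linear_combination a^2 * hsq
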